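/- Let ρ be a density matrix with spectral decomposition ρ = Σ_{j=1}^k p_j |ψ_j⟩⟨ψ_j| with p_1 ≥ p_2 ≥ ... ≥ p_k, and let σ be any density matrix of rank at most r on the same space. Then F(ρ,σ) ≤ Σ_{j=1}^r p_j, where F is the squared fidelity. -/

import Mathlib

open Matrix Kronecker Finset ComplexOrder

noncomputable section
namespace QAE

/-- Partial trace over the second tensor factor. -/
def ptraceB {A B : Type*} [Fintype B] (ρ : Matrix (A × B) (A × B) ℂ) : Matrix A A ℂ :=
  Matrix.of fun i j => ∑ k : B, ρ (i, k) (j, k)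

/-- Partial trace over the first tensor factor. -/
def ptraceA {A B : Type*} [Fintype A] (ρ : Matrix (A × B) (A × B) ℂ) : Matrix B B ℂ :=
  Matrix.of fun i j => ∑ k : A, ρ (k, i) (k, j)

/-- Outer product |v⟩⟨v|. -/
def outer {A : Type*} (v : A → ℂ) : Matrix A A ℂ := Matrix.vecMulVec v (star v)

/-- The old Mathlib `Matrix.PosSemidef.sqrt` (removed upstream), with its original definition. -/
def _root_.Matrix.PosSemidef.sqrt {𝕜 : Type*} [RCLike 𝕜] {n : Type*} [Fintype n] [DecidableEq n]
    {A : Matrix n n 𝕜} (hA : A.PosSemidef) : Matrix n n 𝕜 :=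
  hA.1.eigenvectorUnitary.1 * diagonal ((↑) ∘ (√·) ∘ hA.1.eigenvalues) *
  (star hA.1.eigenvectorUnitary : Matrix n n 𝕜)

lemma _root_.Matrix.PosSemidef.posSemidef_sqrt {𝕜 : Type*} [RCLike 𝕜] {n : Type*} [Fintype n]
    [DecidableEq n] {A : Matrix n n 𝕜} (hA : A.PosSemidef) : PosSemidef hA.sqrt := by
  apply PosSemidef.mul_mul_conjTranspose_same
  refine posSemidef_diagonal_iff.mpr fun i ↦ ?_
  rw [Function.comp_apply, RCLike.nonneg_iff]
  constructor
  · simp only [Function.comp_apply, RCLike.ofReal_re]; exact Real.sqrt_nonneg _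
  · simp only [Function.comp_apply, RCLike.ofReal_im]

lemma sandwich_psd {n : Type*} [Fintype n] [DecidableEq n] {ρ σ : Matrix n n ℂ}
    (hρ : ρ.PosSemidef) (hσ : σ.PosSemidef) :
    (hσ.sqrt * ρ * hσ.sqrt).PosSemidef := by
  have h := hρ.mul_mul_conjTranspose_same hσ.sqrt
  rwa [hσ.posSemidef_sqrt.isHermitian.eq] at h

-- Squared Uhlmann fidelity F(ρ,σ) = (Tr √(σ^{1/2} ρ σ^{1/2}))².
open Classical in
def sqFidelity {n : Type*} [Fintype n] [DecidableEq n] (ρ σ : Matrix n n ℂ) : ℝ :=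
  if h : ρ.PosSemidef ∧ σ.PosSemidef then
    ((sandwich_psd h.1 h.2).sqrt.trace).re ^ 2
  else 0

/-- A density matrix: positive semidefinite with unit trace. -/
def IsDensity {n : Type*} [Fintype n] [DecidableEq n] (ρ : Matrix n n ℂ) : Prop :=
  ρ.PosSemidef ∧ ρ.trace = 1

end QAE
end

-------------------------------------------------------------------------------
-- Auxiliary lemmas
-------------------------------------------------------------------------------

noncomputable section Stmt2Aux
set_option linter.unusedSectionVars false

namespace Stmt2Aux
open Matrix ComplexOrder

variable {n : Type*} [Fintype n] [DecidableEq n]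

lemma dot_mulVec_mulVec (A : Matrix n n ℂ) (x y : n → ℂ) :
    star (A *ᵥ x) ⬝ᵥ (A *ᵥ y) = star x ⬝ᵥ (Aᴴ * A) *ᵥ y := by
  rw [star_mulVec, ← dotProduct_mulVec, mulVec_mulVec]

lemma re_dot_self_nonneg (x : n → ℂ) : 0 ≤ (star x ⬝ᵥ x).re := by
  rw [dotProduct, Complex.re_sum]
  refine Finset.sum_nonneg fun i _ => ?_
  simp; nlinarith [mul_self_nonneg (x i).re, mul_self_nonneg (x i).im]

lemma trace_unitary_conj (U D : Matrix n n ℂ) (hU : star U * U = 1) :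
    (U * D * star U).trace = D.trace := by
  rw [trace_mul_comm, ← mul_assoc, hU, one_mul]

lemma dot_self_re (x : n → ℂ) : (star x ⬝ᵥ x).re = ∑ i, Complex.normSq (x i) := by
  rw [dotProduct, Complex.re_sum]
  congr 1; ext i
  simp [Complex.normSq_apply]


lemma cs_dot (x y : n → ℂ) :
    (star x ⬝ᵥ y).re ≤ Real.sqrt ((star x ⬝ᵥ x).re) * Real.sqrt ((star y ⬝ᵥ y).re) := by
  set xE : EuclideanSpace ℂ n := (WithLp.equiv 2 (n → ℂ)).symm x with hxE
  set yE : EuclideanSpace ℂ n := (WithLp.equiv 2 (n → ℂ)).symm y with hyE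
  have hxn : Real.sqrt ((star x ⬝ᵥ x).re) = ‖xE‖ := by
    have h1 : ((inner ℂ xE xE : ℂ)).re = ‖xE‖ ^ 2 := by
      have := inner_self_eq_norm_sq (𝕜 := ℂ) xE
      simpa [RCLike.re_to_complex] using this
    have h2 : (star x ⬝ᵥ x).re = ‖xE‖ ^ 2 := by
      rw [← h1, EuclideanSpace.inner_eq_star_dotProduct, dotProduct_comm]; rfl
    rw [h2, Real.sqrt_sq (norm_nonneg _)]
  have hyn : Real.sqrt ((star y ⬝ᵥ y).re) = ‖yE‖ := by
    have h1 : ((inner ℂ yE yE : ℂ)).re = ‖yE‖ ^ 2 := by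
      have := inner_self_eq_norm_sq (𝕜 := ℂ) yE
      simpa [RCLike.re_to_complex] using this
    have h2 : (star y ⬝ᵥ y).re = ‖yE‖ ^ 2 := by
      rw [← h1, EuclideanSpace.inner_eq_star_dotProduct, dotProduct_comm]; rfl
    rw [h2, Real.sqrt_sq (norm_nonneg _)]
  have hin : (star x ⬝ᵥ y) = (inner ℂ xE yE : ℂ) := by
    rw [EuclideanSpace.inner_eq_star_dotProduct, dotProduct_comm]; rfl
  rw [hxn, hyn, hin]
  calc (inner ℂ xE yE : ℂ).re ≤ ‖(inner ℂ xE yE : ℂ)‖ := Complex.re_le_norm _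
    _ ≤ ‖xE‖ * ‖yE‖ := norm_inner_le_norm xE yE

/-- Bessel-type inequality for matrices. -/
lemma bessel {ι : Type*} [DecidableEq ι] (Y : Matrix n n ℂ) (s : Finset ι) (u : ι → n → ℂ)
    (h : ∀ i ∈ s, ∀ j ∈ s, star (u i) ⬝ᵥ u j = if i = j then 1 else 0) :
    ∑ i ∈ s, (star (Y *ᵥ u i) ⬝ᵥ (Y *ᵥ u i)).re ≤ (Yᴴ * Y).trace.re := by
  have horth : Orthonormal ℂ
      (fun i : s => ((WithLp.equiv 2 (n → ℂ)).symm (u i) : EuclideanSpace ℂ n)) := by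
    rw [orthonormal_iff_ite]
    intro i j
    have := h i i.2 j j.2
    rw [WithLp.equiv_symm_apply, EuclideanSpace.inner_toLp_toLp, dotProduct_comm, this]
    by_cases hij : i = j
    · simp [hij]
    · rw [if_neg hij, if_neg (fun hc => hij (Subtype.ext hc))]
  have key : ∀ a : n, ∑ i ∈ s, Complex.normSq ((Y *ᵥ u i) a) ≤ ∑ b, Complex.normSq (Y a b) := by
    intro a
    set c : EuclideanSpace ℂ n := (WithLp.equiv 2 (n → ℂ)).symm (fun b => starRingEnd ℂ (Y a b))
      with hc
    have hB := horth.sum_inner_products_le (s := Finset.univ) c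
    have hnorm : ‖c‖ ^ 2 = ∑ b, Complex.normSq (Y a b) := by
      rw [EuclideanSpace.norm_eq, Real.sq_sqrt (by positivity)]
      congr 1; ext b
      simp [hc, Complex.sq_norm]
    have hin : ∀ i : s,
        ‖(inner ℂ ((WithLp.equiv 2 (n → ℂ)).symm (u i) : EuclideanSpace ℂ n) c : ℂ)‖ ^ 2
          = Complex.normSq ((Y *ᵥ u i) a) := by
      intro i
      rw [hc, WithLp.equiv_symm_apply, EuclideanSpace.inner_toLp_toLp, dotProduct_comm]
      have : star (u i) ⬝ᵥ (fun b => starRingEnd ℂ (Y a b)) = starRingEnd ℂ ((Y *ᵥ u i) a) := by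
        simp [dotProduct, mulVec, map_sum, mul_comm]
      rw [this]
      simp [Complex.sq_norm, Complex.normSq_conj]
    rw [hnorm] at hB
    calc ∑ i ∈ s, Complex.normSq ((Y *ᵥ u i) a)
        = ∑ i : s, Complex.normSq ((Y *ᵥ u i) a) := (Finset.sum_coe_sort s _).symm
      _ = ∑ i : s, ‖(inner ℂ ((WithLp.equiv 2 (n → ℂ)).symm (u i) : EuclideanSpace ℂ n) c : ℂ)‖ ^ 2 :=
          Finset.sum_congr rfl fun i _ => (hin i).symm
      _ ≤ ∑ b, Complex.normSq (Y a b) := hB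
  have lhs : ∑ i ∈ s, (star (Y *ᵥ u i) ⬝ᵥ (Y *ᵥ u i)).re
      = ∑ a, ∑ i ∈ s, Complex.normSq ((Y *ᵥ u i) a) := by
    rw [Finset.sum_comm]
    exact Finset.sum_congr rfl fun i _ => dot_self_re _
  have rhs : (Yᴴ * Y).trace.re = ∑ a, ∑ b, Complex.normSq (Y a b) := by
    rw [Matrix.trace, Complex.re_sum, Finset.sum_comm]
    refine Finset.sum_congr rfl fun a _ => ?_
    rw [Matrix.diag, Matrix.mul_apply, Complex.re_sum]
    refine Finset.sum_congr rfl fun b _ => ?_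
    simp [Matrix.conjTranspose_apply, Complex.normSq_apply, Complex.mul_re]
  rw [lhs, rhs]
  exact Finset.sum_le_sum fun a _ => key a

lemma outer_posSemidef (v : n → ℂ) : (QAE.outer v).PosSemidef := by
  refine Matrix.PosSemidef.of_dotProduct_mulVec_nonneg ?_ ?_
  · ext i j
    simp [QAE.outer, Matrix.vecMulVec_apply, Matrix.conjTranspose_apply, mul_comm]
  · intro x
    have h1 : star x ⬝ᵥ (QAE.outer v) *ᵥ x = (star x ⬝ᵥ v) * (star v ⬝ᵥ x) := by
      simp only [QAE.outer, Matrix.vecMulVec_apply, dotProduct, mulVec, Finset.mul_sum,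
        Finset.sum_mul, Pi.star_apply, RCLike.star_def]
      rw [Finset.sum_comm]
      exact Finset.sum_congr rfl fun i _ => Finset.sum_congr rfl fun j _ => by ring
    have h2 : star x ⬝ᵥ v = star (star v ⬝ᵥ x) := by
      simp [dotProduct, map_sum, mul_comm]
    rw [h1, h2]
    exact star_mul_self_nonneg _

lemma smul_outer_posSemidef (c : ℝ) (hc : 0 ≤ c) (v : n → ℂ) :
    ((c : ℂ) • QAE.outer v).PosSemidef := by
  have h := outer_posSemidef v
  refine Matrix.PosSemidef.of_dotProduct_mulVec_nonneg ?_ ?_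
  · ext i j
    simp [Matrix.conjTranspose_apply, QAE.outer, Matrix.vecMulVec_apply, mul_comm]
  · intro x
    rw [Matrix.smul_mulVec, dotProduct_smul]
    exact smul_nonneg (by exact_mod_cast hc) (h.dotProduct_mulVec_nonneg x)

lemma trace_outer_mul (v : n → ℂ) (A : Matrix n n ℂ) :
    (QAE.outer v * A).trace = star v ⬝ᵥ A *ᵥ v := by
  rw [Matrix.trace]
  simp only [Matrix.diag, Matrix.mul_apply, QAE.outer, Matrix.vecMulVec_apply, dotProduct, mulVec]
  rw [Finset.sum_comm]
  refine Finset.sum_congr rfl fun i _ => ?_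
  rw [Finset.mul_sum]
  exact Finset.sum_congr rfl fun j _ => by ring

lemma psd_sum {ι : Type*} (s : Finset ι) (f : ι → Matrix n n ℂ)
    (h : ∀ i ∈ s, (f i).PosSemidef) : (∑ i ∈ s, f i).PosSemidef := by
  classical
  induction s using Finset.induction with
  | empty => simpa using Matrix.PosSemidef.zero
  | insert _ _ hx ih =>
    rw [Finset.sum_insert hx]
    exact (h _ (Finset.mem_insert_self _ _)).add (ih fun i hi => h i (Finset.mem_insert_of_mem hi))

lemma final_combinatorial {k r : ℕ} (p q : Fin k → ℝ) (hpa : Antitone p) (hp0 : ∀ j, 0 ≤ p j)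
    (hq0 : ∀ j, 0 ≤ q j) (hq1 : ∀ j, q j ≤ 1) (hqr : ∑ j, q j ≤ (r : ℝ)) :
    ∑ j, p j * q j ≤ ∑ j ∈ Finset.univ.filter (fun j : Fin k => (j : ℕ) < r), p j := by
  by_cases hkr : k ≤ r
  · have hA : Finset.univ.filter (fun j : Fin k => (j : ℕ) < r) = Finset.univ :=
      Finset.filter_true_of_mem fun j _ => lt_of_lt_of_le j.2 hkr
    rw [hA]
    exact Finset.sum_le_sum fun j _ => by
      simpa using mul_le_mul_of_nonneg_left (hq1 j) (hp0 j)
  · push_neg at hkr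
    set jr : Fin k := ⟨r, hkr⟩ with hjr
    set A := Finset.univ.filter (fun j : Fin k => (j : ℕ) < r) with hA
    have hcard : (r : ℝ) ≤ (A.card : ℝ) := by
      have : (Finset.range r).card ≤ A.card := by
        refine Finset.card_le_card_of_injOn
          (fun i => (⟨min i r, lt_of_le_of_lt (min_le_right i r) hkr⟩ : Fin k)) ?_ ?_
        · intro i hi
          simp only [Finset.coe_range, Set.mem_Iio] at hi
          rw [hA, Finset.mem_coe, Finset.mem_filter]
          exact ⟨Finset.mem_univ _, lt_of_le_of_lt (min_le_left i r) hi⟩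
        · intro a ha b hb hab
          simp only [Finset.coe_range, Set.mem_Iio] at ha hb
          have := congrArg Fin.val hab
          simpa [min_eq_left ha.le, min_eq_left hb.le] using this
      exact_mod_cast (by simpa using this : r ≤ A.card)
    have split := (Finset.sum_filter_add_sum_filter_not Finset.univ
      (fun j : Fin k => (j : ℕ) < r) (fun j => p j * q j)).symm
    have hstep1 : ∑ j ∈ Finset.univ.filter (fun j : Fin k => ¬ (j : ℕ) < r), p j * q j
        ≤ p jr * ∑ j ∈ Finset.univ.filter (fun j : Fin k => ¬ (j : ℕ) < r), q j := by
      rw [Finset.mul_sum]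
      refine Finset.sum_le_sum fun j hj => ?_
      have : jr ≤ j := by
        simp only [Finset.mem_filter, not_lt] at hj
        exact Fin.le_def.mpr hj.2
      exact mul_le_mul_of_nonneg_right (hpa this) (hq0 j)
    have hstep2 : ∑ j ∈ Finset.univ.filter (fun j : Fin k => ¬ (j : ℕ) < r), q j
        ≤ (r : ℝ) - ∑ j ∈ A, q j := by
      have := Finset.sum_filter_add_sum_filter_not Finset.univ
        (fun j : Fin k => (j : ℕ) < r) q
      linarith [this, hqr]
    have hstep3 : p jr * ((r:ℝ) - ∑ j ∈ A, q j) ≤ ∑ j ∈ A, p j * (1 - q j) := by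
      have h1 : (r:ℝ) - ∑ j ∈ A, q j ≤ ∑ j ∈ A, (1 - q j) := by
        rw [Finset.sum_sub_distrib, Finset.sum_const, nsmul_eq_mul, mul_one]
        linarith [hcard]
      calc p jr * ((r:ℝ) - ∑ j ∈ A, q j) ≤ p jr * ∑ j ∈ A, (1 - q j) :=
            mul_le_mul_of_nonneg_left h1 (hp0 jr)
        _ = ∑ j ∈ A, p jr * (1 - q j) := Finset.mul_sum _ _ _
        _ ≤ ∑ j ∈ A, p j * (1 - q j) := by
            refine Finset.sum_le_sum fun j hj => ?_
            have hjle : j ≤ jr := by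
              simp only [hA, Finset.mem_filter] at hj
              exact Fin.le_def.mpr (le_of_lt hj.2)
            exact mul_le_mul_of_nonneg_right (hpa hjle) (by linarith [hq1 j])
    have hmono : p jr * ∑ j ∈ Finset.univ.filter (fun j : Fin k => ¬ (j : ℕ) < r), q j
        ≤ p jr * ((r:ℝ) - ∑ j ∈ A, q j) := mul_le_mul_of_nonneg_left hstep2 (hp0 jr)
    have final : ∑ j ∈ A, p j * q j + ∑ j ∈ A, p j * (1 - q j) = ∑ j ∈ A, p j := by
      rw [← Finset.sum_add_distrib]
      exact Finset.sum_congr rfl fun j _ => by ring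
    calc ∑ j, p j * q j
        = ∑ j ∈ A, p j * q j
            + ∑ j ∈ Finset.univ.filter (fun j : Fin k => ¬ (j : ℕ) < r), p j * q j := split
      _ ≤ ∑ j ∈ A, p j * q j + ∑ j ∈ A, p j * (1 - q j) := by
          have := le_trans hstep1 (le_trans hmono hstep3); linarith
      _ = ∑ j ∈ A, p j := final

lemma conj_mul_conj (U Us A B : Matrix n n ℂ) (h : Us * U = 1) :
    (U * A * Us) * (U * B * Us) = U * (A * B) * Us := by
  have e : (U * A * Us) * (U * B * Us) = U * A * (Us * U) * B * Us := by
    simp only [mul_assoc]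
  rw [e, h, mul_one, mul_assoc U A B]

section proj
variable {σ : Matrix n n ℂ} (hσ : σ.PosSemidef)

noncomputable def projd (hσ : σ.PosSemidef) : n → ℂ :=
  fun i => if hσ.1.eigenvalues i = 0 then 0 else 1

noncomputable def proj (hσ : σ.PosSemidef) : Matrix n n ℂ :=
  hσ.1.eigenvectorUnitary.1 * diagonal (projd hσ) * (star hσ.1.eigenvectorUnitary : Matrix n n ℂ)

lemma unitary_mul_star :
    hσ.1.eigenvectorUnitary.1 * (star hσ.1.eigenvectorUnitary : Matrix n n ℂ) = 1 :=
  (Matrix.mem_unitaryGroup_iff).mp hσ.1.eigenvectorUnitary.2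

lemma star_mul_unitary :
    (star hσ.1.eigenvectorUnitary : Matrix n n ℂ) * hσ.1.eigenvectorUnitary.1 = 1 :=
  (Matrix.mem_unitaryGroup_iff').mp hσ.1.eigenvectorUnitary.2

lemma psd_sqrt_mul_self : hσ.sqrt * hσ.sqrt = σ := by
  rw [Matrix.PosSemidef.sqrt, conj_mul_conj _ _ _ _ (star_mul_unitary hσ), diagonal_mul_diagonal]
  conv_rhs => rw [hσ.1.spectral_theorem, Unitary.conjStarAlgAut_apply]
  congr 2
  exact congrArg diagonal (funext fun i => by
    simp [← Complex.ofReal_mul, Real.mul_self_sqrt (hσ.eigenvalues_nonneg i)])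

lemma proj_mul_sqrt : proj hσ * hσ.sqrt = hσ.sqrt := by
  rw [proj, Matrix.PosSemidef.sqrt, conj_mul_conj _ _ _ _ (star_mul_unitary hσ)]
  congr 2
  rw [diagonal_mul_diagonal]
  exact congrArg diagonal (funext fun i => by
    by_cases h : hσ.1.eigenvalues i = 0 <;> simp [projd, h])

lemma proj_idem : proj hσ * proj hσ = proj hσ := by
  rw [proj, conj_mul_conj _ _ _ _ (star_mul_unitary hσ)]
  congr 2
  rw [diagonal_mul_diagonal]
  exact congrArg diagonal (funext fun i => by
    by_cases h : hσ.1.eigenvalues i = 0 <;> simp [projd, h])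

lemma proj_herm : (proj hσ)ᴴ = proj hσ := by
  rw [proj]
  set U := hσ.1.eigenvectorUnitary.1
  set Us := (star hσ.1.eigenvectorUnitary : Matrix n n ℂ)
  have hd : (diagonal (projd hσ))ᴴ = diagonal (projd hσ) := by
    rw [diagonal_conjTranspose]
    exact congrArg diagonal (funext fun i => by
      by_cases h : hσ.1.eigenvalues i = 0 <;> simp [projd, h])
  have h2 : Usᴴ = U := by
    rw [← Matrix.star_eq_conjTranspose, star_star]
  have h3 : Uᴴ = Us := rfl
  rw [conjTranspose_mul, conjTranspose_mul, hd, h2, h3, mul_assoc]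

lemma proj_psd : (proj hσ).PosSemidef := by
  rw [proj]
  have hd : (diagonal (projd hσ)).PosSemidef := by
    refine Matrix.posSemidef_diagonal_iff.mpr fun i => ?_
    by_cases h : hσ.1.eigenvalues i = 0 <;> simp [projd, h]
  have := hd.mul_mul_conjTranspose_same hσ.1.eigenvectorUnitary.1
  rwa [show (hσ.1.eigenvectorUnitary.1)ᴴ = (star hσ.1.eigenvectorUnitary : Matrix n n ℂ) from rfl]
    at this

lemma one_sub_proj_psd : ((1 : Matrix n n ℂ) - proj hσ).PosSemidef := by
  have hd : (diagonal (fun i => 1 - projd hσ i)).PosSemidef := by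
    refine Matrix.posSemidef_diagonal_iff.mpr fun i => ?_
    by_cases h : hσ.1.eigenvalues i = 0 <;> simp [projd, h]
  have h2 := hd.mul_mul_conjTranspose_same hσ.1.eigenvectorUnitary.1
  have key : (1 : Matrix n n ℂ) - proj hσ =
      hσ.1.eigenvectorUnitary.1 * diagonal (fun i => 1 - projd hσ i) *
        (hσ.1.eigenvectorUnitary.1)ᴴ := by
    have hds : diagonal (fun i => 1 - projd hσ i) = 1 - diagonal (projd hσ) := by
      rw [← diagonal_one, ← diagonal_sub]
    rw [hds, mul_sub, sub_mul, mul_one, proj]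
    congr 1
    exact (unitary_mul_star hσ).symm
  rwa [key]

lemma trace_proj : (proj hσ).trace.re = σ.rank := by
  have h1 : (proj hσ).trace = (diagonal (projd hσ)).trace := by
    rw [proj, trace_mul_comm, ← mul_assoc, star_mul_unitary hσ, one_mul]
  rw [h1, trace_diagonal, hσ.1.rank_eq_card_non_zero_eigs, Complex.re_sum, Fintype.card_subtype,
    Finset.card_eq_sum_ones]
  push_cast
  rw [Finset.sum_filter]
  refine Finset.sum_congr rfl fun i _ => ?_
  by_cases h : hσ.1.eigenvalues i = 0 <;> simp [projd, h]

lemma proj_as_conj_mul : (diagonal (projd hσ) * (star hσ.1.eigenvectorUnitary : Matrix n n ℂ))ᴴ *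
    (diagonal (projd hσ) * (star hσ.1.eigenvectorUnitary : Matrix n n ℂ)) = proj hσ := by
  rw [conjTranspose_mul]
  have h2 : ((star hσ.1.eigenvectorUnitary : Matrix n n ℂ))ᴴ = hσ.1.eigenvectorUnitary.1 := by
    rw [← Matrix.star_eq_conjTranspose, star_star]
  have hd : (diagonal (projd hσ))ᴴ = diagonal (projd hσ) := by
    rw [diagonal_conjTranspose]
    exact congrArg diagonal (funext fun i => by
      by_cases h : hσ.1.eigenvalues i = 0 <;> simp [projd, h])
  rw [h2, hd, proj]
  have : diagonal (projd hσ) * (diagonal (projd hσ) *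
      (star hσ.1.eigenvectorUnitary : Matrix n n ℂ)) =
      diagonal (projd hσ) * (star hσ.1.eigenvectorUnitary : Matrix n n ℂ) := by
    rw [← mul_assoc, diagonal_mul_diagonal]
    congr 1
    exact congrArg diagonal (funext fun i => by
      by_cases h : hσ.1.eigenvalues i = 0 <;> simp [projd, h])
  rw [mul_assoc, this, mul_assoc]

end proj
end Stmt2Aux
end Stmt2Aux

set_option maxHeartbeats 2000000 in
/-- F(ρ,σ) ≤ sum of the r largest eigenvalues of ρ when rank σ ≤ r. -/
theorem stmt2 {n : Type*} [Fintype n] [DecidableEq n]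
    {k : ℕ} (p : Fin k → ℝ) (ψ : Fin k → n → ℂ)
    (hpa : Antitone p) (hp0 : ∀ j, 0 ≤ p j) (hp1 : ∑ j, p j = 1)
    (hor : ∀ i j, star (ψ i) ⬝ᵥ ψ j = if i = j then 1 else 0)
    (ρ : Matrix n n ℂ) (hρ : ρ = ∑ j, (p j : ℂ) • QAE.outer (ψ j))
    (σ : Matrix n n ℂ) (hσ : QAE.IsDensity σ) (r : ℕ) (hrank : σ.rank ≤ r) :
    QAE.sqFidelity ρ σ ≤ ∑ j ∈ Finset.univ.filter (fun j : Fin k => (j : ℕ) < r), p j := by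
  classical
  open Stmt2Aux in
  have hρp : ρ.PosSemidef := by
    rw [hρ]; exact Stmt2Aux.psd_sum _ _ fun j _ => Stmt2Aux.smul_outer_posSemidef _ (hp0 j) _
  obtain ⟨hσp, hσtr⟩ := hσ
  set S := hσp.sqrt with hSdef
  have hS : S.PosSemidef := hσp.posSemidef_sqrt
  set R := hρp.sqrt with hRdef
  have hR : R.PosSemidef := hρp.posSemidef_sqrt
  have hM : (S * ρ * S).PosSemidef := QAE.sandwich_psd hρp hσp
  set lam : n → ℝ := hM.1.eigenvalues with hlamdef
  have hlam0 : ∀ i, 0 ≤ lam i := hM.eigenvalues_nonneg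
  set v : n → n → ℂ := fun i => ⇑(hM.1.eigenvectorBasis i) with hvdef
  -- Step 1 : the fidelity equals (∑ √λᵢ)²
  have htr : hM.sqrt.trace = ∑ i, (Real.sqrt (lam i) : ℂ) := by
    rw [Matrix.PosSemidef.sqrt, Stmt2Aux.trace_unitary_conj _ _ (Stmt2Aux.star_mul_unitary hM),
      trace_diagonal]
    rfl
  have hfid : QAE.sqFidelity ρ σ = (∑ i, Real.sqrt (lam i)) ^ 2 := by
    rw [QAE.sqFidelity, dif_pos (⟨hρp, hσp⟩ : ρ.PosSemidef ∧ σ.PosSemidef)]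
    have : (QAE.sandwich_psd hρp hσp).sqrt.trace = hM.sqrt.trace := rfl
    rw [this, htr, Complex.re_sum]
    norm_num
  -- orthonormality of eigenbasis in dot-product form
  have hON : ∀ i j, star (v i) ⬝ᵥ v j = if i = j then 1 else 0 := by
    intro i j
    have h := hM.1.eigenvectorBasis.orthonormal
    rw [orthonormal_iff_ite] at h
    have h' := h i j
    rw [EuclideanSpace.inner_eq_star_dotProduct, dotProduct_comm] at h'
    exact h'
  set w : n → n → ℂ := fun i => (R * S) *ᵥ v i with hwdef
  have hRSM : (R * S)ᴴ * (R * S) = S * ρ * S := by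
    rw [conjTranspose_mul, hR.1.eq, hS.1.eq]
    have e : S * R * (R * S) = S * (R * R) * S := by simp only [mul_assoc]
    rw [e, Stmt2Aux.psd_sqrt_mul_self hρp]
  have key2 : ∀ i j, star (w i) ⬝ᵥ w j = (lam j : ℂ) * (if i = j then 1 else 0) := by
    intro i j
    rw [hwdef]
    simp only []
    rw [Stmt2Aux.dot_mulVec_mulVec, hRSM]
    have hmv : (S * ρ * S) *ᵥ v j = lam j • v j := hM.1.mulVec_eigenvectorBasis j
    rw [hmv, dotProduct_smul, hON i j]
    rw [Complex.real_smul]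
  set supp : Finset n := Finset.univ.filter (fun i => lam i ≠ 0) with hsuppdef
  set u : n → n → ℂ := fun i => (((Real.sqrt (lam i))⁻¹ : ℝ) : ℂ) • w i with hudef
  have sqrt_ne : ∀ i : n, lam i ≠ 0 → Real.sqrt (lam i) ≠ 0 := by
    intro i hi hc
    exact hi (by rw [← Real.mul_self_sqrt (hlam0 i), hc, mul_zero])
  have key3 : ∀ i ∈ supp, ∀ j ∈ supp, star (u i) ⬝ᵥ u j = if i = j then 1 else 0 := by
    intro i hi j hj
    simp only [hsuppdef, Finset.mem_filter, Finset.mem_univ, true_and] at hi hj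
    rw [hudef]
    simp only []
    rw [star_smul, smul_dotProduct, dotProduct_smul, key2, Complex.star_def,
      Complex.conj_ofReal]
    by_cases hij : i = j
    · subst hij
      simp only [if_pos rfl, mul_one, smul_eq_mul]
      have hne : Real.sqrt (lam i) ≠ 0 := sqrt_ne i hi
      have hC : ((Real.sqrt (lam i) : ℝ) : ℂ) ≠ 0 := by exact_mod_cast hne
      push_cast
      field_simp
      exact_mod_cast (Real.sq_sqrt (hlam0 i)).symm
    · simp only [if_neg hij, mul_zero, smul_zero]
  set Pi' : Matrix n n ℂ := Stmt2Aux.proj hσp with hPidef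
  set a : n → n → ℂ := fun i => (Pi' * R) *ᵥ u i with hadef
  set b : n → n → ℂ := fun i => S *ᵥ v i with hbdef
  have key4 : ∀ i ∈ supp, Real.sqrt (lam i) ≤
      Real.sqrt ((star (a i) ⬝ᵥ a i).re) * Real.sqrt ((star (b i) ⬝ᵥ b i).re) := by
    intro i hi
    simp only [hsuppdef, Finset.mem_filter, Finset.mem_univ, true_and] at hi
    have hsq : Real.sqrt (lam i) * Real.sqrt (lam i) = lam i := Real.mul_self_sqrt (hlam0 i)
    have hne : Real.sqrt (lam i) ≠ 0 := sqrt_ne i hi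
    -- √λᵢ = ⟨u i, w i⟩
    have e1 : star (u i) ⬝ᵥ w i = (Real.sqrt (lam i) : ℂ) := by
      rw [hudef]
      simp only []
      rw [star_smul, smul_dotProduct, key2, if_pos rfl, mul_one, Complex.star_def,
        Complex.conj_ofReal, smul_eq_mul, ← Complex.ofReal_mul]
      congr 1
      rw [inv_mul_eq_div, div_eq_iff hne]
      exact hsq.symm
    -- w i = (R * Π) *ᵥ b i
    have hPS : Pi' * S = S := Stmt2Aux.proj_mul_sqrt hσp
    have e2 : w i = (R * Pi') *ᵥ b i := by
      rw [hwdef, hbdef]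
      simp only []
      rw [mulVec_mulVec]
      have : R * Pi' * S = R * S := by rw [mul_assoc, hPS]
      rw [this]
    -- ⟨u i, w i⟩ = ⟨a i, b i⟩
    have e3 : star (u i) ⬝ᵥ w i = star (a i) ⬝ᵥ b i := by
      rw [e2, dotProduct_mulVec]
      congr 1
      rw [hadef]
      simp only []
      rw [star_mulVec]
      rw [conjTranspose_mul, Stmt2Aux.proj_herm hσp, hR.1.eq]
    -- Cauchy–Schwarz
    have e4 : (star (a i) ⬝ᵥ b i).re ≤
        Real.sqrt ((star (a i) ⬝ᵥ a i).re) * Real.sqrt ((star (b i) ⬝ᵥ b i).re) :=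
      Stmt2Aux.cs_dot _ _
    calc Real.sqrt (lam i) = (star (a i) ⬝ᵥ b i).re := by
          rw [← e3, e1, Complex.ofReal_re]
      _ ≤ _ := e4
  -- Bound A : ∑ ‖a i‖² over supp ≤ Re tr(ρ Π)
  have hPRConj : (Pi' * R)ᴴ * (Pi' * R) = R * Pi' * R := by
    rw [conjTranspose_mul, Stmt2Aux.proj_herm hσp, hR.1.eq]
    have : R * Pi' * (Pi' * R) = R * (Pi' * Pi') * R := by simp only [mul_assoc]
    rw [this, Stmt2Aux.proj_idem hσp]
  have htrRPR : (R * Pi' * R).trace = (ρ * Pi').trace := by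
    rw [trace_mul_comm, ← mul_assoc, Stmt2Aux.psd_sqrt_mul_self hρp]
  have boundA : ∑ i ∈ supp, (star (a i) ⬝ᵥ a i).re ≤ ((ρ * Pi').trace).re := by
    have hb := Stmt2Aux.bessel (Pi' * R) supp u key3
    rw [hPRConj, htrRPR] at hb
    exact hb
  -- Bound B : ∑ ‖b i‖² over supp ≤ 1
  have boundB : ∑ i ∈ supp, (star (b i) ⬝ᵥ b i).re ≤ 1 := by
    have hb := Stmt2Aux.bessel S supp v (fun i _ j _ => hON i j)
    have hSS : Sᴴ * S = σ := by rw [hS.1.eq, Stmt2Aux.psd_sqrt_mul_self hσp]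
    rw [hSS, hσtr] at hb
    simpa using hb
  -- the q's
  set q : Fin k → ℝ := fun j => (star (ψ j) ⬝ᵥ Pi' *ᵥ ψ j).re with hqdef
  have hq0 : ∀ j, 0 ≤ q j := by
    intro j
    have h := (Stmt2Aux.proj_psd hσp).dotProduct_mulVec_nonneg (ψ j)
    rw [Complex.le_def] at h
    simpa [hqdef] using h.1
  have hq1 : ∀ j, q j ≤ 1 := by
    intro j
    have h := (Stmt2Aux.one_sub_proj_psd hσp).dotProduct_mulVec_nonneg (ψ j)
    rw [sub_mulVec, one_mulVec, dotProduct_sub, hor j j, if_pos rfl, Complex.le_def] at h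
    have := h.1
    simp only [Complex.zero_re, Complex.sub_re, Complex.one_re] at this
    simpa [hqdef] using by linarith
  have hqsum : ∑ j, q j ≤ (r : ℝ) := by
    have hb := Stmt2Aux.bessel (diagonal (Stmt2Aux.projd hσp) *
      (star hσp.1.eigenvectorUnitary : Matrix n n ℂ)) Finset.univ ψ
      (fun i _ j _ => hor i j)
    rw [Stmt2Aux.proj_as_conj_mul hσp] at hb
    have heq : ∀ j : Fin k, (star ((diagonal (Stmt2Aux.projd hσp) *
        (star hσp.1.eigenvectorUnitary : Matrix n n ℂ)) *ᵥ ψ j) ⬝ᵥ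
        ((diagonal (Stmt2Aux.projd hσp) *
        (star hσp.1.eigenvectorUnitary : Matrix n n ℂ)) *ᵥ ψ j)).re = q j := by
      intro j
      rw [Stmt2Aux.dot_mulVec_mulVec, Stmt2Aux.proj_as_conj_mul hσp]
    rw [Finset.sum_congr rfl (fun j _ => heq j)] at hb
    calc ∑ j, q j ≤ ((Stmt2Aux.proj hσp).trace).re := hb
      _ = (σ.rank : ℝ) := Stmt2Aux.trace_proj hσp
      _ ≤ (r : ℝ) := by exact_mod_cast hrank
  -- T = ∑ p q
  have hT : ((ρ * Pi').trace).re = ∑ j, p j * q j := by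
    rw [hρ, Finset.sum_mul, trace_sum, Complex.re_sum]
    refine Finset.sum_congr rfl fun j _ => ?_
    rw [smul_mul_assoc, trace_smul, smul_eq_mul, Complex.re_ofReal_mul,
      Stmt2Aux.trace_outer_mul]
  have hTnonneg : 0 ≤ ((ρ * Pi').trace).re := by
    rw [hT]
    exact Finset.sum_nonneg fun j _ => mul_nonneg (hp0 j) (hq0 j)
  -- assemble
  have hsum_supp : ∑ i, Real.sqrt (lam i) = ∑ i ∈ supp, Real.sqrt (lam i) := by
    symm
    refine Finset.sum_filter_of_ne fun i _ hne => ?_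
    intro hc
    exact hne (by rw [hc, Real.sqrt_zero])
  have hCS : (∑ i ∈ supp, Real.sqrt (lam i)) ^ 2 ≤
      (∑ i ∈ supp, (star (a i) ⬝ᵥ a i).re) * (∑ i ∈ supp, (star (b i) ⬝ᵥ b i).re) := by
    have h1 : (∑ i ∈ supp, Real.sqrt (lam i)) ^ 2 ≤
        (∑ i ∈ supp, Real.sqrt ((star (a i) ⬝ᵥ a i).re) * Real.sqrt ((star (b i) ⬝ᵥ b i).re)) ^ 2 := by
      have hle := Finset.sum_le_sum key4
      have hnn : 0 ≤ ∑ i ∈ supp, Real.sqrt (lam i) :=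
        Finset.sum_nonneg fun i _ => Real.sqrt_nonneg _
      exact pow_le_pow_left₀ hnn hle 2
    have h2 := Finset.sum_mul_sq_le_sq_mul_sq supp
      (fun i => Real.sqrt ((star (a i) ⬝ᵥ a i).re))
      (fun i => Real.sqrt ((star (b i) ⬝ᵥ b i).re))
    have h3 : ∑ i ∈ supp, Real.sqrt ((star (a i) ⬝ᵥ a i).re) ^ 2
        = ∑ i ∈ supp, (star (a i) ⬝ᵥ a i).re :=
      Finset.sum_congr rfl fun i _ => Real.sq_sqrt (Stmt2Aux.re_dot_self_nonneg _)
    have h4 : ∑ i ∈ supp, Real.sqrt ((star (b i) ⬝ᵥ b i).re) ^ 2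
        = ∑ i ∈ supp, (star (b i) ⬝ᵥ b i).re :=
      Finset.sum_congr rfl fun i _ => Real.sq_sqrt (Stmt2Aux.re_dot_self_nonneg _)
    rw [h3, h4] at h2
    exact le_trans h1 h2
  have hAB : (∑ i ∈ supp, (star (a i) ⬝ᵥ a i).re) * (∑ i ∈ supp, (star (b i) ⬝ᵥ b i).re)
      ≤ ((ρ * Pi').trace).re := by
    have hBnn : 0 ≤ ∑ i ∈ supp, (star (b i) ⬝ᵥ b i).re :=
      Finset.sum_nonneg fun i _ => Stmt2Aux.re_dot_self_nonneg _
    calc (∑ i ∈ supp, (star (a i) ⬝ᵥ a i).re) * (∑ i ∈ supp, (star (b i) ⬝ᵥ b i).re)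
        ≤ ((ρ * Pi').trace).re * 1 := mul_le_mul boundA boundB hBnn hTnonneg
      _ = ((ρ * Pi').trace).re := mul_one _
  calc QAE.sqFidelity ρ σ = (∑ i, Real.sqrt (lam i)) ^ 2 := hfid
    _ = (∑ i ∈ supp, Real.sqrt (lam i)) ^ 2 := by rw [hsum_supp]
    _ ≤ (∑ i ∈ supp, (star (a i) ⬝ᵥ a i).re) * (∑ i ∈ supp, (star (b i) ⬝ᵥ b i).re) := hCS
    _ ≤ ((ρ * Pi').trace).re := hAB
    _ = ∑ j, p j * q j := hT
    _ ≤ ∑ j ∈ Finset.univ.filter (fun j : Fin k => (j : ℕ) < r), p j :=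
        Stmt2Aux.final_combinatorial p q hpa hp0 hq0 hq1 hqsum
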